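/- Let b ≥ 1 be an integer, let θ > 1 be a real number, and define f : ℝ → ℝ by f(x) = exp(−θ·∑_{j=1}^b x^j/j). Then for every integer k with 1 ≤ k ≤ ⌈θ⌉ − 1 and all integers a, n with 1 ≤ a < n, one has (1/k!)·|f^{(k)}(1)|/f(1) · ( ∏_{i=0}^{n−a−1}(θ−k+i) ) / ( ∏_{i=0}^{n−a−1}(θ+i) ) ≤ (bθ²/(n−a))^k, where f^{(k)} denotes the k-th derivative of f. -/

import Mathlib

open Finset Nat

lemma iterG (b : ℕ) (θ : ℝ) (m : ℕ) :
    deriv^[m] (fun x : ℝ => -θ * ∑ j ∈ Finset.Icc 1 b, x ^ (j - 1)) =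
      fun x : ℝ => -θ * ∑ j ∈ Finset.Icc 1 b,
        (∏ i ∈ Finset.range m, (((j - 1 : ℕ) : ℝ) - (i : ℕ))) * x ^ (j - 1 - m) := by
  induction m with
  | zero => simp
  | succ m ih =>
    rw [Function.iterate_succ_apply', ih]
    funext x
    have hterm : ∀ j ∈ Finset.Icc 1 b,
        HasDerivAt (fun x : ℝ =>
            (∏ i ∈ Finset.range m, (((j - 1 : ℕ) : ℝ) - (i : ℕ))) * x ^ (j - 1 - m))
          ((∏ i ∈ Finset.range (m+1), (((j - 1 : ℕ) : ℝ) - (i : ℕ))) * x ^ (j - 1 - (m+1))) x := by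
      intro j hj
      have h := (hasDerivAt_pow (j - 1 - m) x).const_mul
        (∏ i ∈ Finset.range m, (((j - 1 : ℕ) : ℝ) - (i : ℕ)))
      rw [Finset.prod_range_succ]
      rcases le_or_gt m (j - 1) with h1 | h1
      · have he : j - 1 - m - 1 = j - 1 - (m + 1) := by omega
        rw [Nat.cast_sub h1, he] at h
        refine h.congr_deriv ?_
        ring
      · have hC : (∏ i ∈ Finset.range m, (((j - 1 : ℕ) : ℝ) - (i : ℕ))) = 0 :=
          Finset.prod_eq_zero (Finset.mem_range.2 h1) (sub_self _)
        simp only [hC, zero_mul]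
        exact hasDerivAt_const x 0
    have hsum := HasDerivAt.fun_sum hterm (x := x)
    exact (hsum.const_mul (-θ)).deriv

lemma boundG (b : ℕ) (θ : ℝ) (hθ : 0 ≤ θ) (m : ℕ) :
    |iteratedDeriv m (fun x : ℝ => -θ * ∑ j ∈ Finset.Icc 1 b, x ^ (j - 1)) 1| ≤
      θ * (b : ℝ) ^ (m + 1) := by
  rw [iteratedDeriv_eq_iterate, iterG]
  simp only [one_pow, mul_one]
  rw [abs_mul, abs_neg, abs_of_nonneg hθ]
  have hterm : ∀ j ∈ Finset.Icc 1 b,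
      |∏ i ∈ Finset.range m, (((j - 1 : ℕ) : ℝ) - (i : ℕ))| ≤ (b : ℝ) ^ m := by
    intro j hj
    rw [Finset.mem_Icc] at hj
    rcases le_or_gt m (j - 1) with h1 | h1
    · have hnn : ∀ i ∈ Finset.range m, (0 : ℝ) ≤ ((j - 1 : ℕ) : ℝ) - (i : ℕ) := by
        intro i hi
        rw [Finset.mem_range] at hi
        have : (i : ℝ) ≤ ((j - 1 : ℕ) : ℝ) := by exact_mod_cast le_trans (le_of_lt hi) h1
        linarith
      rw [abs_of_nonneg (Finset.prod_nonneg hnn)]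
      calc ∏ i ∈ Finset.range m, (((j - 1 : ℕ) : ℝ) - (i : ℕ))
          ≤ ∏ _i ∈ Finset.range m, (b : ℝ) := by
            apply Finset.prod_le_prod hnn
            intro i hi
            have : ((j - 1 : ℕ) : ℝ) ≤ (b : ℝ) := by exact_mod_cast le_trans (Nat.sub_le j 1) hj.2
            have : (0:ℝ) ≤ (i:ℕ) := by positivity
            linarith
        _ = (b : ℝ) ^ m := by rw [Finset.prod_const, Finset.card_range]
    · have : (∏ i ∈ Finset.range m, (((j - 1 : ℕ) : ℝ) - (i : ℕ))) = 0 :=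
        Finset.prod_eq_zero (Finset.mem_range.2 h1) (sub_self _)
      rw [this, abs_zero]
      positivity
  refine mul_le_mul_of_nonneg_left ?_ hθ
  calc |∑ j ∈ Finset.Icc 1 b, ∏ i ∈ Finset.range m, (((j - 1 : ℕ) : ℝ) - (i : ℕ))|
      ≤ ∑ j ∈ Finset.Icc 1 b, |∏ i ∈ Finset.range m, (((j - 1 : ℕ) : ℝ) - (i : ℕ))| :=
        Finset.abs_sum_le_sum_abs _ _
    _ ≤ ∑ _j ∈ Finset.Icc 1 b, (b : ℝ) ^ m := Finset.sum_le_sum hterm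
    _ = (b : ℝ) * (b : ℝ) ^ m := by
        rw [Finset.sum_const, Nat.card_Icc]
        simp [nsmul_eq_mul]
    _ = (b : ℝ) ^ (m + 1) := by ring

lemma derivF (b : ℕ) (θ : ℝ) :
    deriv (fun x : ℝ => Real.exp (-θ * ∑ j ∈ Finset.Icc 1 b, x ^ j / (j : ℝ)))
      = fun x : ℝ => (-θ * ∑ j ∈ Finset.Icc 1 b, x ^ (j - 1)) *
          Real.exp (-θ * ∑ j ∈ Finset.Icc 1 b, x ^ j / (j : ℝ)) := by
  funext x
  have hterm : ∀ j ∈ Finset.Icc 1 b, HasDerivAt (fun x : ℝ => x ^ j / (j : ℝ)) (x ^ (j - 1)) x := by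
    intro j hj
    rw [Finset.mem_Icc] at hj
    have hj0 : (j : ℝ) ≠ 0 := Nat.cast_ne_zero.mpr (by omega)
    have h := (hasDerivAt_pow j x).div_const (j : ℝ)
    refine h.congr_deriv ?_
    exact mul_div_cancel_left₀ _ hj0
  have hsum := (HasDerivAt.fun_sum hterm).const_mul (-θ)
  have hexp := hsum.exp
  rw [hexp.deriv]
  ring

lemma mainBound (b : ℕ) (θ : ℝ) (hθ : 1 ≤ θ) (k : ℕ) :
    |iteratedDeriv k (fun x : ℝ => Real.exp (-θ * ∑ j ∈ Finset.Icc 1 b, x ^ j / (j : ℝ))) 1| ≤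
      (k ! : ℝ) * ((b : ℝ) * θ) ^ k *
        Real.exp (-θ * ∑ j ∈ Finset.Icc 1 b, (1 : ℝ) ^ j / (j : ℝ)) := by
  induction k using Nat.strong_induction_on with
  | _ k IH =>
    have hθ0 : (0 : ℝ) ≤ θ := le_trans zero_le_one hθ
    match k with
    | 0 => simp [le_abs_self, abs_of_pos, Real.exp_pos]
    | (m+1) =>
      have hG : ContDiff ℝ (m : WithTop ℕ∞)
          (fun x : ℝ => -θ * ∑ j ∈ Finset.Icc 1 b, x ^ (j - 1)) :=
        contDiff_const.mul (ContDiff.sum fun j _ => contDiff_id.pow _)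
      have hF : ContDiff ℝ (m : WithTop ℕ∞)
          (fun x : ℝ => Real.exp (-θ * ∑ j ∈ Finset.Icc 1 b, x ^ j / (j : ℝ))) :=
        (contDiff_const.mul (ContDiff.sum fun j _ => (contDiff_id.pow _).div_const _)).exp
      have hle := norm_iteratedFDeriv_mul_le hG hF (1 : ℝ) (le_refl (m : WithTop ℕ∞))
      set E := Real.exp (-θ * ∑ j ∈ Finset.Icc 1 b, (1 : ℝ) ^ j / (j : ℝ)) with hE
      have hE0 : (0 : ℝ) ≤ E := le_of_lt (Real.exp_pos _)
      have key : ∀ i ∈ Finset.range (m + 1),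
          (m.choose i : ℝ) *
            ‖iteratedFDeriv ℝ i (fun x : ℝ => -θ * ∑ j ∈ Finset.Icc 1 b, x ^ (j - 1)) 1‖ *
            ‖iteratedFDeriv ℝ (m - i)
              (fun x : ℝ => Real.exp (-θ * ∑ j ∈ Finset.Icc 1 b, x ^ j / (j : ℝ))) 1‖ ≤
          (m ! : ℝ) * θ ^ (m + 1) * (b : ℝ) ^ (m + 1) * E := by
        intro i hi
        rw [Finset.mem_range] at hi
        obtain ⟨l, rfl⟩ : ∃ l, m = i + l := ⟨m - i, by omega⟩
        rw [show i + l - i = l from by omega]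
        have h1 : ‖iteratedFDeriv ℝ i (fun x : ℝ => -θ * ∑ j ∈ Finset.Icc 1 b, x ^ (j - 1)) 1‖ ≤
            θ * (b : ℝ) ^ (i + 1) := by
          rw [norm_iteratedFDeriv_eq_norm_iteratedDeriv, Real.norm_eq_abs]
          exact boundG b θ hθ0 i
        have h2 : ‖iteratedFDeriv ℝ l
            (fun x : ℝ => Real.exp (-θ * ∑ j ∈ Finset.Icc 1 b, x ^ j / (j : ℝ))) 1‖ ≤
            (l ! : ℝ) * ((b : ℝ) * θ) ^ l * E := by
          rw [norm_iteratedFDeriv_eq_norm_iteratedDeriv, Real.norm_eq_abs]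
          exact IH l (by omega)
        have hcl : ((i + l).choose i * l ! : ℕ) ≤ (i + l)! := by
          calc (i + l).choose i * l ! ≤ (i + l).choose i * l ! * i ! :=
                Nat.le_mul_of_pos_right _ (Nat.factorial_pos i)
            _ = (i + l).choose i * i ! * (i + l - i)! := by
                rw [show i + l - i = l from by omega]; ring
            _ = (i + l)! := Nat.choose_mul_factorial_mul_factorial (by omega)
        calc ((i + l).choose i : ℝ) * _ * _ ≤
            ((i + l).choose i : ℝ) * (θ * (b : ℝ) ^ (i + 1)) *
              ((l ! : ℝ) * ((b : ℝ) * θ) ^ l * E) := by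
              gcongr
          _ = (((i + l).choose i * l ! : ℕ) : ℝ) * θ ^ (l + 1) * (b : ℝ) ^ (i + l + 1) * E := by
              push_cast; ring
          _ ≤ ((i + l)! : ℝ) * θ ^ (i + l + 1) * (b : ℝ) ^ (i + l + 1) * E := by
              gcongr <;> first
                | exact hθ
                | omega
                | exact_mod_cast hcl
          _ = ((i + l)! : ℝ) * θ ^ (i + l + 1) * (b : ℝ) ^ (i + l + 1) * E := rfl
      calc |iteratedDeriv (m + 1)
              (fun x : ℝ => Real.exp (-θ * ∑ j ∈ Finset.Icc 1 b, x ^ j / (j : ℝ))) 1|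
          = ‖iteratedFDeriv ℝ m (fun x : ℝ =>
              (-θ * ∑ j ∈ Finset.Icc 1 b, x ^ (j - 1)) *
                Real.exp (-θ * ∑ j ∈ Finset.Icc 1 b, x ^ j / (j : ℝ))) 1‖ := by
            rw [iteratedDeriv_succ', derivF, norm_iteratedFDeriv_eq_norm_iteratedDeriv,
              Real.norm_eq_abs]
        _ ≤ ∑ i ∈ Finset.range (m + 1), (m.choose i : ℝ) *
              ‖iteratedFDeriv ℝ i (fun x : ℝ => -θ * ∑ j ∈ Finset.Icc 1 b, x ^ (j - 1)) 1‖ *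
              ‖iteratedFDeriv ℝ (m - i)
                (fun x : ℝ => Real.exp (-θ * ∑ j ∈ Finset.Icc 1 b, x ^ j / (j : ℝ))) 1‖ := hle
        _ ≤ ∑ _i ∈ Finset.range (m + 1), (m ! : ℝ) * θ ^ (m + 1) * (b : ℝ) ^ (m + 1) * E :=
            Finset.sum_le_sum key
        _ = ((m + 1) : ℝ) * ((m ! : ℝ) * θ ^ (m + 1) * (b : ℝ) ^ (m + 1) * E) := by
            rw [Finset.sum_const, Finset.card_range]; push_cast; ring
        _ = ((m + 1)! : ℝ) * ((b : ℝ) * θ) ^ (m + 1) * E := by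
            rw [Nat.factorial_succ]; push_cast; ring

lemma ratioBound (θ : ℝ) (k N : ℕ) (hk : (k : ℝ) < θ) (hN : 1 ≤ N) :
    (∏ i ∈ Finset.range N, (θ - k + i)) / (∏ i ∈ Finset.range N, (θ + i)) ≤
      (θ / N) ^ k := by
  have hθ0 : (0 : ℝ) < θ := lt_of_le_of_lt (Nat.cast_nonneg k) hk
  have hNpos : (0 : ℝ) < (N : ℝ) := by exact_mod_cast hN
  have hnum_nn : ∀ i ∈ Finset.range N, (0 : ℝ) ≤ θ - k + i := by
    intro i _
    have : (0 : ℝ) ≤ (i : ℝ) := Nat.cast_nonneg i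
    linarith
  have hden_pos : (0 : ℝ) < ∏ i ∈ Finset.range N, (θ + i) := by
    apply Finset.prod_pos
    intro i _
    have : (0 : ℝ) ≤ (i : ℝ) := Nat.cast_nonneg i
    linarith
  rcases le_or_gt N k with h | h
  · have h1 : (∏ i ∈ Finset.range N, (θ - k + i)) / (∏ i ∈ Finset.range N, (θ + i)) ≤ 1 := by
      rw [div_le_one hden_pos]
      apply Finset.prod_le_prod hnum_nn
      intro i _
      have : (0 : ℝ) ≤ (k : ℝ) := Nat.cast_nonneg k
      linarith
    have h2 : (1 : ℝ) ≤ (θ / N) ^ k := by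
      apply one_le_pow₀
      rw [le_div_iff₀ hNpos, one_mul]
      calc (N : ℝ) ≤ (k : ℝ) := by exact_mod_cast h
        _ ≤ θ := le_of_lt hk
    linarith
  · obtain ⟨M, rfl⟩ : ∃ M, N = k + M := ⟨N - k, by omega⟩
    rw [Finset.prod_range_add, show k + M = M + k from add_comm k M, Finset.prod_range_add,
      ← add_comm k M]
    have e1 : (∏ i ∈ Finset.range M, (θ - k + ((k + i : ℕ) : ℝ))) =
        ∏ i ∈ Finset.range M, (θ + i) := by
      apply Finset.prod_congr rfl
      intro i _
      push_cast
      ring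
    rw [e1]
    have hCpos : (0 : ℝ) < ∏ i ∈ Finset.range M, (θ + i) := by
      apply Finset.prod_pos
      intro i _
      have : (0 : ℝ) ≤ (i : ℝ) := Nat.cast_nonneg i
      linarith
    rw [mul_comm (∏ i ∈ Finset.range k, (θ - k + i)) _, mul_div_mul_left _ _ (ne_of_gt hCpos),
      div_pow]
    have hA : ∏ i ∈ Finset.range k, (θ - (k : ℝ) + ↑i) ≤ θ ^ k := by
      have hh := Finset.prod_le_prod (s := Finset.range k)
        (f := fun i : ℕ => θ - (k : ℝ) + ↑i) (g := fun _ => θ) ?_ ?_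
      · simpa [Finset.prod_const, Finset.card_range] using hh
      · intro i hi
        have h0 : (0 : ℝ) ≤ (i : ℝ) := Nat.cast_nonneg i
        have h1 : (i : ℝ) ≤ (k : ℝ) := by
          rw [Finset.mem_range] at hi; exact_mod_cast le_of_lt hi
        linarith
      · intro i hi
        rw [Finset.mem_range] at hi
        have h1 : (i : ℝ) ≤ (k : ℝ) := by exact_mod_cast le_of_lt hi
        linarith
    have hB : ((k + M : ℕ) : ℝ) ^ k ≤ ∏ i ∈ Finset.range k, (θ + ((M + i : ℕ) : ℝ)) := by
      have hh := Finset.prod_le_prod (s := Finset.range k)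
        (f := fun _ : ℕ => ((k + M : ℕ) : ℝ)) (g := fun i : ℕ => θ + ((M + i : ℕ) : ℝ)) ?_ ?_
      · simpa [Finset.prod_const, Finset.card_range] using hh
      · intro i _
        positivity
      · intro i _
        have h1 : ((M + i : ℕ) : ℝ) = (M : ℝ) + i := by push_cast; ring
        have h2 : (0 : ℝ) ≤ (i : ℝ) := Nat.cast_nonneg i
        have h3 : ((k + M : ℕ) : ℝ) = (k : ℝ) + M := by push_cast; ring
        rw [h1, h3]
        linarith
    exact div_le_div₀ (by positivity) hA (pow_pos hNpos k) hB

theorem stmt_11 (b : ℕ) (hb : 1 ≤ b) (θ : ℝ) (hθ : 1 < θ)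
    (f : ℝ → ℝ) (hf : f = fun x : ℝ => Real.exp (-θ * ∑ j ∈ Finset.Icc 1 b, x ^ j / (j : ℝ)))
    (k : ℕ) (hk1 : 1 ≤ k) (hk2 : (k : ℤ) ≤ ⌈θ⌉ - 1)
    (a n : ℕ) (ha : 1 ≤ a) (han : a < n) :
    (1 / (Nat.factorial k : ℝ)) * (|iteratedDeriv k f 1| / f 1) *
        ((∏ i ∈ Finset.range (n - a), (θ - k + i)) /
          (∏ i ∈ Finset.range (n - a), (θ + i))) ≤
      ((b : ℝ) * θ ^ 2 / ((n : ℝ) - a)) ^ k := by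
  have hθ1 : (1 : ℝ) ≤ θ := le_of_lt hθ
  have hkθ : (k : ℝ) < θ := by
    have h1 : (k : ℤ) < ⌈θ⌉ := by omega
    exact_mod_cast Int.lt_ceil.mp h1
  have hf1 : f 1 = Real.exp (-θ * ∑ j ∈ Finset.Icc 1 b, (1 : ℝ) ^ j / (j : ℝ)) := by rw [hf]
  have hfD : iteratedDeriv k f 1 =
      iteratedDeriv k (fun x : ℝ => Real.exp (-θ * ∑ j ∈ Finset.Icc 1 b, x ^ j / (j : ℝ))) 1 := by
    rw [hf]
  set N := n - a with hNdef
  have hN1 : 1 ≤ N := by omega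
  have hNcast : ((N : ℕ) : ℝ) = (n : ℝ) - a := by
    rw [hNdef, Nat.cast_sub (le_of_lt han)]
  have hNpos : (0 : ℝ) < (N : ℝ) := by exact_mod_cast hN1
  rw [hfD, hf1, ← hNcast]
  set E := Real.exp (-θ * ∑ j ∈ Finset.Icc 1 b, (1 : ℝ) ^ j / (j : ℝ)) with hE
  have hEpos : (0 : ℝ) < E := Real.exp_pos _
  set D := iteratedDeriv k
    (fun x : ℝ => Real.exp (-θ * ∑ j ∈ Finset.Icc 1 b, x ^ j / (j : ℝ))) 1 with hD
  have hDbound : |D| ≤ (k ! : ℝ) * ((b : ℝ) * θ) ^ k * E := mainBound b θ hθ1 k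
  have h1 : |D| / E ≤ (k ! : ℝ) * ((b : ℝ) * θ) ^ k := (div_le_iff₀ hEpos).mpr hDbound
  set R := (∏ i ∈ Finset.range N, (θ - k + i)) / (∏ i ∈ Finset.range N, (θ + i)) with hR
  have hRnn : 0 ≤ R := by
    apply div_nonneg
    · apply Finset.prod_nonneg
      intro i _
      have h0 : (0 : ℝ) ≤ (i : ℝ) := Nat.cast_nonneg i
      linarith
    · apply Finset.prod_nonneg
      intro i _
      have h0 : (0 : ℝ) ≤ (i : ℝ) := Nat.cast_nonneg i
      linarith
  have hRle : R ≤ (θ / N) ^ k := ratioBound θ k N hkθ hN1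
  have hkfac : (0 : ℝ) < (k ! : ℝ) := by exact_mod_cast Nat.factorial_pos k
  calc (1 / (k ! : ℝ)) * (|D| / E) * R
      ≤ (1 / (k ! : ℝ)) * ((k ! : ℝ) * ((b : ℝ) * θ) ^ k) * R := by
        apply mul_le_mul_of_nonneg_right _ hRnn
        exact mul_le_mul_of_nonneg_left h1 (by positivity)
    _ ≤ (1 / (k ! : ℝ)) * ((k ! : ℝ) * ((b : ℝ) * θ) ^ k) * ((θ / N) ^ k) := by
        apply mul_le_mul_of_nonneg_left hRle
        positivity
    _ = (((b : ℝ) * θ) * (θ / N)) ^ k := by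
        rw [mul_pow]
        field_simp
        ring
    _ = ((b : ℝ) * θ ^ 2 / (N : ℝ)) ^ k := by
        congr 1
        field_simp
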